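/- For every real z > 0 and every integer k ≥ 0, e^{1/z} - ∑_{m=0}^k 1/(m! z^m) = (1/(k! (k+1)!)) ∫_0^∞ F_k(u) u^k e^{-zu} du, where F_k(u) = ∑_{n=0}^∞ u^n n! / ((k+1)_n (k+2)_n n!) · 1 with (a)_n the Pochhammer symbol; explicitly F_k(u) = ∑_{n=0}^∞ u^n (1)_n / ((k+1)_n (k+2)_n n!). -/

import Mathlib

set_option maxHeartbeats 1000000

open MeasureTheory Set Real

lemma gamma_int {z : ℝ} (hz : 0 < z) (m : ℕ) :
    ∫ u in Set.Ioi (0:ℝ), u ^ m * Real.exp (-z * u)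
      = (m.factorial : ℝ) / z ^ (m + 1) := by
  have h := Real.integral_rpow_mul_exp_neg_mul_Ioi (a := (m:ℝ) + 1) (r := z)
    (by positivity) hz
  rw [show ((m:ℝ) + 1 - 1) = (m:ℝ) by ring] at h
  have : ∀ u ∈ Set.Ioi (0:ℝ), u ^ (m:ℝ) * Real.exp (-(z * u)) = u ^ m * Real.exp (-z * u) := by
    intro u hu
    rw [Real.rpow_natCast, neg_mul]
  rw [setIntegral_congr_fun measurableSet_Ioi this] at h
  rw [h]
  rw [show ((m:ℝ) + 1) = ((m + 1 : ℕ) : ℝ) by push_cast; ring, Real.rpow_natCast]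
  rw [show ((m + 1 : ℕ) : ℝ) = (m:ℝ) + 1 by push_cast; ring, Real.Gamma_nat_eq_factorial]
  rw [div_pow, one_pow, div_mul_eq_mul_div, one_mul]

lemma integrable_pow_exp {z : ℝ} (hz : 0 < z) (m : ℕ) :
    IntegrableOn (fun u : ℝ => u ^ m * Real.exp (-z * u)) (Set.Ioi 0) := by
  have h := integrableOn_rpow_mul_exp_neg_mul_rpow (p := 1) (s := (m:ℝ)) (b := z)
    (lt_of_lt_of_le neg_one_lt_zero (Nat.cast_nonneg m)) one_pos hz
  refine h.congr_fun (fun u hu => ?_) measurableSet_Ioi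
  beta_reduce
  rw [Real.rpow_natCast, Real.rpow_one]

lemma term_eq (k n : ℕ) (u : ℝ) :
    u ^ n * (Polynomial.eval (1:ℝ) (ascPochhammer ℝ n)) /
      (Polynomial.eval ((k:ℝ)+1) (ascPochhammer ℝ n) *
        Polynomial.eval ((k:ℝ)+2) (ascPochhammer ℝ n) * (n.factorial : ℝ))
    = ((k.factorial : ℝ) * ((k+1).factorial : ℝ)) *
        (u ^ n / (((n+k).factorial : ℝ) * ((n+k+1).factorial : ℝ))) := by
  have hA := factorial_mul_ascPochhammer ℝ k n
  have hB := factorial_mul_ascPochhammer ℝ (k+1) n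
  have hApos : 0 < Polynomial.eval ((k:ℝ)+1) (ascPochhammer ℝ n) :=
    ascPochhammer_pos n _ (by positivity)
  have hBpos : 0 < Polynomial.eval ((k:ℝ)+2) (ascPochhammer ℝ n) :=
    ascPochhammer_pos n _ (by positivity)
  have hB' : ((k+1).factorial : ℝ) * Polynomial.eval ((k:ℝ)+2) (ascPochhammer ℝ n)
      = (((k+1)+n).factorial : ℝ) := by
    rw [← hB]; norm_num [show ((k:ℝ)+1+1) = (k:ℝ)+2 by ring]
  have hA' : Polynomial.eval ((k:ℝ)+1) (ascPochhammer ℝ n)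
      = ((k+n).factorial : ℝ) / (k.factorial : ℝ) := by
    field_simp [← hA]
    linarith [hA]
  have hB'' : Polynomial.eval ((k:ℝ)+2) (ascPochhammer ℝ n)
      = (((k+1)+n).factorial : ℝ) / ((k+1).factorial : ℝ) := by
    field_simp [← hB']
    linarith [hB']
  rw [ascPochhammer_eval_one, hA', hB'',
    show n + k = k + n from Nat.add_comm n k,
    show k + n + 1 = (k+1) + n from by omega]
  have h1 : ((k+n).factorial : ℝ) ≠ 0 := Nat.cast_ne_zero.2 (Nat.factorial_ne_zero _)
  have h2 : (((k+1)+n).factorial : ℝ) ≠ 0 := Nat.cast_ne_zero.2 (Nat.factorial_ne_zero _)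
  have h3 : ((k).factorial : ℝ) ≠ 0 := Nat.cast_ne_zero.2 (Nat.factorial_ne_zero _)
  have h4 : (((k+1)).factorial : ℝ) ≠ 0 := Nat.cast_ne_zero.2 (Nat.factorial_ne_zero _)
  have h5 : ((n).factorial : ℝ) ≠ 0 := Nat.cast_ne_zero.2 (Nat.factorial_ne_zero _)
  field_simp

theorem stmt_12 : ∀ (z : ℝ), 0 < z → ∀ (k : ℕ),
    Real.exp (1 / z) - (∑ m ∈ Finset.range (k + 1), 1 / ((m.factorial : ℝ) * z ^ m))
      = (1 / ((k.factorial : ℝ) * ((k + 1).factorial : ℝ))) *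
          ∫ u in Set.Ioi (0 : ℝ),
            (∑' n : ℕ, u ^ n * (ascPochhammer ℝ n).eval (1 : ℝ) /
              ((ascPochhammer ℝ n).eval ((k : ℝ) + 1) *
                (ascPochhammer ℝ n).eval ((k : ℝ) + 2) * (n.factorial : ℝ)))
              * u ^ k * Real.exp (-z * u) := by
  intro z hz k
  set C : ℝ := (k.factorial : ℝ) * ((k+1).factorial : ℝ) with hC
  have hCpos : 0 < C := by positivity
  set F : ℕ → ℝ → ℝ := fun n u =>
    u ^ (n+k) * Real.exp (-z*u) / (((n+k).factorial : ℝ) * ((n+k+1).factorial : ℝ)) with hF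
  have hF_int : ∀ n : ℕ, Integrable (F n) (volume.restrict (Set.Ioi 0)) := fun n =>
    (integrable_pow_exp hz (n+k)).div_const _
  have hF_val : ∀ n : ℕ, (∫ u in Set.Ioi (0:ℝ), F n u)
      = (1/z) ^ (n+k+1) / ((n+k+1).factorial : ℝ) := by
    intro n
    simp only [hF, integral_div, gamma_int hz]
    have h1 : ((n+k).factorial : ℝ) ≠ 0 := Nat.cast_ne_zero.2 (Nat.factorial_ne_zero _)
    have h2 : ((n+k+1).factorial : ℝ) ≠ 0 := Nat.cast_ne_zero.2 (Nat.factorial_ne_zero _)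
    rw [div_pow, one_pow]
    field_simp
  have hsum : Summable (fun n : ℕ => (1/z : ℝ) ^ (n+(k+1)) / ((n+(k+1)).factorial : ℝ)) :=
    (summable_nat_add_iff (k+1)).2 (Real.summable_pow_div_factorial (1/z))
  have hnorm : ∀ n : ℕ, (∫ u in Set.Ioi (0:ℝ), ‖F n u‖) = ∫ u in Set.Ioi (0:ℝ), F n u := by
    intro n
    refine setIntegral_congr_fun measurableSet_Ioi (fun u hu => ?_)
    have hu' : (0:ℝ) < u := hu
    exact Real.norm_of_nonneg (by positivity)
  have key : ∑' n : ℕ, (∫ u in Set.Ioi (0:ℝ), F n u)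
      = ∫ u in Set.Ioi (0:ℝ), ∑' n : ℕ, F n u := by
    refine integral_tsum_of_summable_integral_norm hF_int ?_
    simp only [hnorm, hF_val]
    exact hsum
  -- pointwise identity of the integrand
  have hpt : ∀ u ∈ Set.Ioi (0:ℝ),
      (∑' n : ℕ, u ^ n * (ascPochhammer ℝ n).eval (1 : ℝ) /
        ((ascPochhammer ℝ n).eval ((k : ℝ) + 1) *
          (ascPochhammer ℝ n).eval ((k : ℝ) + 2) * (n.factorial : ℝ)))
        * u ^ k * Real.exp (-z * u) = C * ∑' n : ℕ, F n u := by
    intro u _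
    have : (∑' n : ℕ, u ^ n * (ascPochhammer ℝ n).eval (1 : ℝ) /
        ((ascPochhammer ℝ n).eval ((k : ℝ) + 1) *
          (ascPochhammer ℝ n).eval ((k : ℝ) + 2) * (n.factorial : ℝ)))
        = C * ∑' n : ℕ, u ^ n / (((n+k).factorial : ℝ) * ((n+k+1).factorial : ℝ)) := by
      rw [← tsum_mul_left]
      exact tsum_congr fun n => term_eq k n u
    rw [this, mul_assoc, mul_assoc, ← tsum_mul_right]
    congr 1
    refine tsum_congr fun n => ?_
    simp only [hF]
    rw [pow_add]
    ring
  rw [setIntegral_congr_fun measurableSet_Ioi hpt, integral_const_mul, ← key]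
  simp only [hF_val]
  rw [← mul_assoc, one_div_mul_cancel (ne_of_gt hCpos), one_mul]
  -- now the series identity
  have hexp : Real.exp (1/z) = ∑' j : ℕ, (1/z) ^ j / (j.factorial : ℝ) := by
    rw [Real.exp_eq_exp_ℝ, NormedSpace.exp_eq_tsum_div]
  have hf : ∀ m : ℕ, (1:ℝ) / ((m.factorial : ℝ) * z ^ m) = (1/z) ^ m / (m.factorial : ℝ) := by
    intro m
    rw [div_pow, one_pow, div_div, mul_comm]
  have hS := Summable.sum_add_tsum_nat_add (f := fun j : ℕ => (1/z:ℝ) ^ j / (j.factorial : ℝ)) (k+1) (Real.summable_pow_div_factorial (1/z))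
  simp only [hf]
  have : ∑' n : ℕ, (1/z : ℝ) ^ (n+k+1) / ((n+k+1).factorial : ℝ)
      = ∑' n : ℕ, (1/z : ℝ) ^ (n+(k+1)) / ((n+(k+1)).factorial : ℝ) := by
    refine tsum_congr fun n => by rw [← add_assoc]
  rw [this]
  linarith [hS, hexp]
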